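/- Let G be a finite simple graph, x a vertex of G, and A a dominating set of G. Then A ∩ N[x] is nonempty, and consequently if x is C3-free with X = N[x] and A = A1 ∪ A2 is a separable γ-set of G effective under a permutation π fixing V(G) − X pointwise, moving every vertex of X, and having no 2-cycles inside X, then |A ∩ X| is exactly 1 or 2. -/

import Mathlib

open SimpleGraph

variable {V : Type*}

/-- `D` is a dominating set of `G`: every vertex is in `D` or adjacent to a vertex of `D`. -/
def IsDomSet (G : SimpleGraph V) (D : Set V) : Prop :=
  ∀ v : V, ∃ d ∈ D, d = v ∨ G.Adj d v

/-- The domination number of `G`: minimum cardinality of a dominating set. -/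
noncomputable def domNum (G : SimpleGraph V) : ℕ :=
  sInf {n | ∃ D : Set V, IsDomSet G D ∧ D.ncard = n}

/-- The prism `πG` of `G`: two disjoint copies of `G` together with the matching
`{u (π u) : u ∈ V(G)}`, the second copy playing the role of `G'`. -/
def prism (G : SimpleGraph V) (π : Equiv.Perm V) : SimpleGraph (V ⊕ V) where
  Adj a b :=
    match a, b with
    | Sum.inl u, Sum.inl v => G.Adj u v
    | Sum.inr u, Sum.inr v => G.Adj u v
    | Sum.inl u, Sum.inr v => π u = v
    | Sum.inr u, Sum.inl v => π v = u
  symm := ⟨by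
    rintro (u | u) (v | v) h
    · exact G.adj_symm h
    · exact h
    · exact h
    · exact G.adj_symm h⟩
  loopless := ⟨by
    rintro (u | u) h
    · exact G.irrefl h
    · exact G.irrefl h⟩

/-- The closed neighborhood `N[v]` of a vertex. -/
def closedNbhd (G : SimpleGraph V) (v : V) : Set V :=
  insert v (G.neighborSet v)

/-- `x` is a `C₃`-free vertex: non-isolated and belonging to no triangle of `G`. -/
def C3Free (G : SimpleGraph V) (x : V) : Prop :=
  (∃ y, G.Adj x y) ∧ ∀ u v : V, G.Adj x u → G.Adj x v → ¬ G.Adj u v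

/-- `A = A1 ∪ A2` is a separable γ-set of `G` (an `A1`-γ-set): `A1, A2` are nonempty,
disjoint, `A` is a γ-set, and `A1` dominates `V(G) - A`. -/
def SepGammaSet (G : SimpleGraph V) (A1 A2 : Set V) : Prop :=
  A1.Nonempty ∧ A2.Nonempty ∧ Disjoint A1 A2 ∧
  IsDomSet G (A1 ∪ A2) ∧ (A1 ∪ A2).ncard = domNum G ∧
  ∀ v ∉ A1 ∪ A2, ∃ u ∈ A1, G.Adj u v

/-- The separable γ-set `A = A1 ∪ A2` is effective under `π`: `π(A)` is a γ-set of the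
copy `G'` of `G` (identified with `G`) whose dominating part is `B2' = π(A2)`,
i.e. `π(A2)` dominates `V(G') - π(A)`. -/
def Effective (G : SimpleGraph V) (π : Equiv.Perm V) (A1 A2 : Set V) : Prop :=
  IsDomSet G (⇑π '' (A1 ∪ A2)) ∧ (⇑π '' (A1 ∪ A2)).ncard = domNum G ∧
  ∀ v ∉ ⇑π '' (A1 ∪ A2), ∃ u ∈ ⇑π '' A2, G.Adj u v

/-- The star `K_{1,m}` on `Fin (m+1)`, with center `0` adjacent to the `m` leaves. -/
def starGraph (m : ℕ) : SimpleGraph (Fin (m + 1)) where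
  Adj a b := (a = 0 ∧ b ≠ 0) ∨ (b = 0 ∧ a ≠ 0)
  symm := ⟨fun a b h => Or.symm h⟩
  loopless := ⟨fun a h => by rcases h with ⟨h1, h2⟩ | ⟨h1, h2⟩ <;> exact h2 h1⟩

/-- A dominating set has cardinality at least the domination number. -/
lemma domNum_le_ncard {G : SimpleGraph V} {D : Set V} (h : IsDomSet G D) :
    domNum G ≤ D.ncard :=
  Nat.sInf_le ⟨D, h, rfl⟩

/-- a dominating set meets every closed neighborhood, and consequently an
effective separable γ-set meets `X = N[x]` in exactly 1 or 2 vertices. -/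
theorem dom_meets_closedNbhd_and_card [Fintype V] (G : SimpleGraph V) (x : V)
    (A1 A2 : Set V) (hdom : IsDomSet G (A1 ∪ A2)) :
    ((A1 ∪ A2) ∩ closedNbhd G x).Nonempty ∧
    (C3Free G x → SepGammaSet G A1 A2 →
      ∀ π : Equiv.Perm V, (∀ w ∉ closedNbhd G x, π w = w) →
        (∀ w ∈ closedNbhd G x, π w ≠ w) →
        (∀ u ∈ closedNbhd G x, ∀ w ∈ closedNbhd G x, π w = u → π u ≠ w) →
        Effective G π A1 A2 →
        ((A1 ∪ A2) ∩ closedNbhd G x).ncard = 1 ∨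
          ((A1 ∪ A2) ∩ closedNbhd G x).ncard = 2) := by
  set A : Set V := A1 ∪ A2 with hA
  set X : Set V := closedNbhd G x with hX
  -- Part 1: the dominating set meets N[x].
  have hmeet : (A ∩ X).Nonempty := by
    obtain ⟨d, hd, hdx⟩ := hdom x
    refine ⟨d, hd, ?_⟩
    rcases hdx with h | h
    · exact Or.inl h
    · exact Or.inr (G.adj_symm h)
  refine ⟨hmeet, ?_⟩
  intro _ hsep π hfix _ _ heff
  obtain ⟨-, -, hdisj, -, hcard, hA1dom⟩ := hsep
  obtain ⟨-, -, hB2dom⟩ := heff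
  -- basic facts
  have hXx : ∀ v ∈ X, v = x ∨ G.Adj x v := by
    intro v hv
    rcases hv with h | h
    · exact Or.inl h
    · exact Or.inr h
  -- π fixes the complement of X pointwise, hence maps X into X
  have hπX : ∀ a ∈ X, π a ∈ X := by
    intro a ha
    by_contra hna
    have h1 : π (π a) = π a := hfix _ hna
    have h2 : π a = a := π.injective h1
    rw [h2] at hna; exact hna ha
  -- finiteness
  have hfin : ∀ s : Set V, s.Finite := fun s => s.toFinite
  set S1 : Set V := A1 ∩ X with hS1
  set S2 : Set V := A2 ∩ X with hS2
  have hSsplit : A ∩ X = S1 ∪ S2 := Set.union_inter_distrib_right A1 A2 X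
  have hdisjS : Disjoint S1 S2 :=
    hdisj.mono Set.inter_subset_left Set.inter_subset_left
  have hScard : (A ∩ X).ncard = S1.ncard + S2.ncard := by
    rw [hSsplit]; exact Set.ncard_union_eq hdisjS (hfin _) (hfin _)
  -- |A \ X| + |A ∩ X| = |A| = γ
  have hdiff : (A \ X).ncard + (A ∩ X).ncard = domNum G := by
    have h1 : A \ (A ∩ X) = A \ X := Set.diff_self_inter
    have := Set.ncard_diff_add_ncard_of_subset (Set.inter_subset_left (s := A) (t := X))
      (hfin A)
    rw [h1] at this
    rw [this, hcard]
  have hSleA : (A ∩ X).ncard ≤ domNum G := by omega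
  -- First dominating set: {x} ∪ (A \ X) ∪ S1 ; shows |S2| ≤ 1
  have hD1 : IsDomSet G (insert x (A \ X ∪ S1)) := by
    intro v
    by_cases hvX : v ∈ X
    · rcases hXx v hvX with h | h
      · exact ⟨x, Set.mem_insert _ _, Or.inl h.symm⟩
      · exact ⟨x, Set.mem_insert _ _, Or.inr h⟩
    · by_cases hvA : v ∈ A
      · exact ⟨v, Set.mem_insert_of_mem _ (Or.inl ⟨hvA, hvX⟩), Or.inl rfl⟩
      · obtain ⟨u, hu, hadj⟩ := hA1dom v hvA
        by_cases huX : u ∈ X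
        · exact ⟨u, Set.mem_insert_of_mem _ (Or.inr ⟨hu, huX⟩), Or.inr hadj⟩
        · exact ⟨u, Set.mem_insert_of_mem _ (Or.inl ⟨Or.inl hu, huX⟩), Or.inr hadj⟩
  have hcard1 : domNum G ≤ 1 + ((A \ X).ncard + S1.ncard) := by
    have h1 := domNum_le_ncard hD1
    have h2 : (insert x (A \ X ∪ S1)).ncard ≤ (A \ X ∪ S1).ncard + 1 :=
      Set.ncard_insert_le _ _
    have h3 : (A \ X ∪ S1).ncard ≤ (A \ X).ncard + S1.ncard := Set.ncard_union_le _ _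
    omega
  -- Second dominating set: {x} ∪ (A \ X) ∪ π(S2) ; shows |S1| ≤ 1
  have hD2 : IsDomSet G (insert x (A \ X ∪ ⇑π '' S2)) := by
    intro v
    by_cases hvX : v ∈ X
    · rcases hXx v hvX with h | h
      · exact ⟨x, Set.mem_insert _ _, Or.inl h.symm⟩
      · exact ⟨x, Set.mem_insert _ _, Or.inr h⟩
    · by_cases hvA : v ∈ A
      · exact ⟨v, Set.mem_insert_of_mem _ (Or.inl ⟨hvA, hvX⟩), Or.inl rfl⟩
      · -- v ∉ X, v ∉ A : then v ∉ π(A), so π(A2) dominates v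
        have hvπA : v ∉ ⇑π '' A := by
          rintro ⟨a, ha, rfl⟩
          by_cases haX : a ∈ X
          · exact hvX (hπX a haX)
          · rw [hfix a haX] at hvA; exact hvA ha
        obtain ⟨u, hu, hadj⟩ := hB2dom v hvπA
        obtain ⟨b, hb, rfl⟩ := hu
        by_cases hbX : b ∈ X
        · exact ⟨π b, Set.mem_insert_of_mem _ (Or.inr ⟨b, ⟨hb, hbX⟩, rfl⟩), Or.inr hadj⟩
        · refine ⟨π b, Set.mem_insert_of_mem _ (Or.inl ?_), Or.inr hadj⟩
          rw [hfix b hbX]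
          exact ⟨Or.inr hb, hbX⟩
  have hcard2 : domNum G ≤ 1 + ((A \ X).ncard + S2.ncard) := by
    have h1 := domNum_le_ncard hD2
    have h2 : (insert x (A \ X ∪ ⇑π '' S2)).ncard ≤ (A \ X ∪ ⇑π '' S2).ncard + 1 :=
      Set.ncard_insert_le _ _
    have h3 : (A \ X ∪ ⇑π '' S2).ncard ≤ (A \ X).ncard + (⇑π '' S2).ncard :=
      Set.ncard_union_le _ _
    have h4 : (⇑π '' S2).ncard = S2.ncard := Set.ncard_image_of_injective _ π.injective
    omega
  have hpos : 0 < (A ∩ X).ncard := (Set.ncard_pos (hfin _)).mpr hmeet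
  omega
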